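/- arXiv:2210.05973 — 2 statements merged into one kernel-verified Lean document; each statement's English description precedes it below -/
import Mathlib

section
/- Let v : ℝ³ → ℝ² and θ : ℝ³ → ℝ be smooth and 1-periodic in the horizontal variables, and suppose that ∫_{−h}^0 div_H v(x_H,ζ) dζ = 0 for every x_H (equivalently, w(v)(x_H,0) = 0). Set w(v)(x_H,x₃) = −∫_{−h}^{x₃} div_H v(x_H,ζ) dζ, u = (v, w(v)) : ℝ³ → ℝ³, and Θ(x_H,x₃) = ∫_{−h}^{x₃} θ(x_H,ζ) dζ. Then ∫_𝒪 Θ² ⟨v, (u·∇)v⟩ dx + ∫_𝒪 ‖v‖² Θ ( ∫_{−h}^{x₃} [(u·∇)θ](x_H,ζ) dζ ) dx = ∫_𝒪 ‖v‖² Θ [ ∫_{−h}^{x₃} [(v·∇_H)θ](x_H,ζ) dζ − [(v·∇_H)Θ](x) + ∫_{−h}^{x₃} div_H v(x_H,ζ) · θ(x_H,ζ) dζ ] dx, where ‖·‖ and ⟨·,·⟩ are the Euclidean norm and inner product on ℝ². -/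
open MeasureTheory Real

noncomputable section

/-- Partial derivative of `f` in the `j`-th coordinate direction. -/
def pd (j : Fin 3) (f : (Fin 3 → ℝ) → ℝ) (x : Fin 3 → ℝ) : ℝ :=
  fderiv ℝ f x (Pi.single j 1)

/-- `f` is 1-periodic in the two horizontal variables. -/
def HorizPeriodic (f : (Fin 3 → ℝ) → ℝ) : Prop :=
  ∀ x : Fin 3 → ℝ, f (x + Pi.single 0 1) = f x ∧ f (x + Pi.single 1 1) = f x

/-- The fundamental domain `[0,1] × [0,1] × [-h,0]` of `𝒪 = 𝕋² × (-h,0)`. -/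
def Box (h : ℝ) : Set (Fin 3 → ℝ) := Set.Icc ![0, 0, -h] ![1, 1, 0]

/-- Horizontal divergence `div_H v = ∂₁ v¹ + ∂₂ v²`. -/
def divH (v : Fin 2 → (Fin 3 → ℝ) → ℝ) (x : Fin 3 → ℝ) : ℝ :=
  pd 0 (v 0) x + pd 1 (v 1) x

/-- Horizontal advection `(v · ∇_H) g = v¹ ∂₁ g + v² ∂₂ g`. -/
def advH (v : Fin 2 → (Fin 3 → ℝ) → ℝ) (g : (Fin 3 → ℝ) → ℝ) (x : Fin 3 → ℝ) : ℝ :=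
  v 0 x * pd 0 g x + v 1 x * pd 1 g x

/-- Advection `(u · ∇) g` by the full velocity field `u = (v, w)`. -/
def adv3 (v : Fin 2 → (Fin 3 → ℝ) → ℝ) (w g : (Fin 3 → ℝ) → ℝ) (x : Fin 3 → ℝ) : ℝ :=
  v 0 x * pd 0 g x + v 1 x * pd 1 g x + w x * pd 2 g x

/-- Vertical velocity `w(v)(x) = -∫_{-h}^{x₃} div_H v (x_H, ζ) dζ`. -/
def wv (h : ℝ) (v : Fin 2 → (Fin 3 → ℝ) → ℝ) (x : Fin 3 → ℝ) : ℝ :=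
  -(∫ ζ in (-h)..(x 2), divH v (Function.update x 2 ζ))

/-- Vertical primitive `Θ(x) = ∫_{-h}^{x₃} θ(x_H, ζ) dζ`. -/
def vint (h : ℝ) (θ : (Fin 3 → ℝ) → ℝ) (x : Fin 3 → ℝ) : ℝ :=
  ∫ ζ in (-h)..(x 2), θ (Function.update x 2 ζ)


/-! ### Auxiliary lemmas -/

section Aux

open intervalIntegral

abbrev E3 := Fin 3 → ℝ

/-- Projection killing the third coordinate. -/
def piL : E3 →L[ℝ] E3 :=
  ContinuousLinearMap.pi (fun i => if i = 2 then 0 else ContinuousLinearMap.proj i)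

lemma piL_apply (x : E3) (i : Fin 3) : piL x i = if i = 2 then 0 else x i := by
  simp only [piL, ContinuousLinearMap.pi_apply]
  split <;> simp

lemma update_eq (x : E3) (ζ : ℝ) :
    Function.update x 2 ζ = piL x + ζ • (Pi.single (2 : Fin 3) (1:ℝ) : E3) := by
  funext i
  rcases eq_or_ne i 2 with rfl | hi
  · simp [piL_apply]
  · simp [piL_apply, hi, Function.update_of_ne hi, Pi.single_eq_of_ne hi]

lemma update_norm_le (x y : E3) (ζ : ℝ) (hζ : |ζ - x 2| ≤ ‖y - x‖) :
    ‖Function.update y 2 ζ - x‖ ≤ ‖y - x‖ := by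
  rw [pi_norm_le_iff_of_nonneg (norm_nonneg _)]
  intro i
  rcases eq_or_ne i 2 with rfl | hi
  · simpa [Function.update_self, Real.norm_eq_abs] using hζ
  · simp only [Pi.sub_apply, Function.update_of_ne hi]
    exact (norm_le_pi_norm (y - x) i)

lemma abs_sub_le_of_mem_uIcc {s t ζ : ℝ} (hζ : ζ ∈ Set.uIcc s t) : |ζ - s| ≤ |t - s| := by
  rcases Set.mem_uIcc.mp hζ with ⟨h1, h2⟩ | ⟨h1, h2⟩
  · rw [abs_of_nonneg (by linarith)]
    exact (by linarith : ζ - s ≤ t - s).trans (le_abs_self _)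
  · rw [abs_of_nonpos (by linarith)]
    exact (by linarith : -(ζ - s) ≤ -(t - s)).trans (neg_le_abs _)

lemma continuous_update2 : Continuous fun p : E3 × ℝ => Function.update p.1 2 p.2 := by
  simp only [update_eq]
  exact (piL.continuous.comp continuous_fst).add (continuous_snd.smul continuous_const)

lemma continuous_update2' (y : E3) : Continuous fun ζ : ℝ => Function.update y 2 ζ :=
  continuous_update2.comp (Continuous.prodMk_right y)

/-- The derivative of the parametric primitive. -/
def vder (G : E3 → ℝ) (a : ℝ) (x : E3) : E3 →L[ℝ] ℝ :=
  (∫ ζ in a..(x 2), (fderiv ℝ G (Function.update x 2 ζ)).comp piL)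
    + G x • ContinuousLinearMap.proj 2

theorem hasFDerivAt_vint {G : E3 → ℝ} (hG : ContDiff ℝ (⊤:ℕ∞) G) (a : ℝ) (x : E3) :
    HasFDerivAt (fun y => ∫ ζ in a..(y 2), G (Function.update y 2 ζ)) (vder G a x) x := by
  have hGc : Continuous G := hG.continuous
  have hGd : Differentiable ℝ G := hG.differentiable (by simp)
  have hG' : Continuous (fderiv ℝ G) :=
    (hG.fderiv_right (m := (⊤:ℕ∞)) (by exact_mod_cast le_top)).continuous
  have hint : ∀ (y : E3) (s t : ℝ),
      IntervalIntegrable (fun ζ => G (Function.update y 2 ζ)) volume s t :=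
    fun y s t => (hGc.comp (continuous_update2' y)).intervalIntegrable s t
  have hsplit : ∀ y : E3, (∫ ζ in a..(y 2), G (Function.update y 2 ζ))
      = (∫ ζ in a..(x 2), G (Function.update y 2 ζ))
        + ∫ ζ in (x 2)..(y 2), G (Function.update y 2 ζ) :=
    fun y => (integral_add_adjacent_intervals (hint y a (x 2)) (hint y (x 2) (y 2))).symm
  have hA : HasFDerivAt (fun y : E3 => ∫ ζ in a..(x 2), G (Function.update y 2 ζ))
      (∫ ζ in a..(x 2), (fderiv ℝ G (Function.update x 2 ζ)).comp piL) x := by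
    obtain ⟨C, hC⟩ : ∃ C, ∀ z ∈ (fun p : E3 × ℝ => Function.update p.1 2 p.2) ''
        (Metric.closedBall x 1 ×ˢ Set.uIcc a (x 2)), ‖(fderiv ℝ G z).comp piL‖ ≤ C := by
      refine IsCompact.exists_bound_of_continuousOn
        (((isCompact_closedBall x 1).prod isCompact_uIcc).image continuous_update2)
        (Continuous.continuousOn ?_)
      exact hG'.clm_comp continuous_const
    have hd : ∀ (ζ : ℝ) (y : E3), HasFDerivAt (fun y : E3 => G (Function.update y 2 ζ))
        ((fderiv ℝ G (Function.update y 2 ζ)).comp piL) y := by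
      intro ζ y
      have haff : HasFDerivAt (fun y : E3 => piL y + ζ • (Pi.single (2:Fin 3) (1:ℝ) : E3))
          (piL : E3 →L[ℝ] E3) y := piL.hasFDerivAt.add_const _
      have := ((hGd _).hasFDerivAt.comp y haff)
      simp only [Function.comp_def, ← update_eq] at this
      exact this
    refine intervalIntegral.hasFDerivAt_integral_of_dominated_of_fderiv_le
      (F := fun (y : E3) (ζ : ℝ) => G (Function.update y 2 ζ))
      (F' := fun (y : E3) (ζ : ℝ) => (fderiv ℝ G (Function.update y 2 ζ)).comp piL)
      (μ := volume) (a := a) (b := x 2) (x₀ := x) (bound := fun _ => C)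
      (s := Metric.ball x 1) (Metric.ball_mem_nhds x one_pos) ?_ (hint x a (x 2)) ?_ ?_ (_root_.intervalIntegrable_const (c := C)) ?_
    · exact Filter.Eventually.of_forall fun y =>
        ((hGc.comp (continuous_update2' y)).aestronglyMeasurable)
    · exact ((hG'.clm_comp continuous_const).comp (continuous_update2' x)).aestronglyMeasurable
    · refine MeasureTheory.ae_of_all _ fun ζ hζ y hy => hC _ ?_
      exact ⟨(y, ζ), ⟨Metric.ball_subset_closedBall hy, Set.uIoc_subset_uIcc hζ⟩, rfl⟩
    · exact MeasureTheory.ae_of_all _ fun ζ _ y _ => hd ζ y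
  have hB : HasFDerivAt (fun y : E3 => ∫ ζ in (x 2)..(y 2), G (Function.update y 2 ζ))
      (G x • (ContinuousLinearMap.proj 2 : E3 →L[ℝ] ℝ)) x := by
    rw [hasFDerivAt_iff_isLittleO_nhds_zero]
    rw [Asymptotics.isLittleO_iff]
    intro c hc
    obtain ⟨δ, hδ, hGδ⟩ := Metric.continuousAt_iff.mp hGc.continuousAt (ε := c) hc
    filter_upwards [Metric.ball_mem_nhds (0 : E3) hδ] with z hz
    have hz' : ‖z‖ < δ := by simpa [Metric.mem_ball] using hz
    have h0 : (∫ ζ in (x 2)..(x 2), G (Function.update x 2 ζ)) = 0 :=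
      intervalIntegral.integral_same
    have happ : (G x • (ContinuousLinearMap.proj 2 : E3 →L[ℝ] ℝ)) z = G x * z 2 := by
      simp [ContinuousLinearMap.smul_apply, smul_eq_mul]
    have hxz2 : (x + z) 2 = x 2 + z 2 := rfl
    have hkey : (∫ ζ in (x 2)..((x+z) 2), G (Function.update (x+z) 2 ζ)) - G x * z 2
        = ∫ ζ in (x 2)..((x+z) 2), (G (Function.update (x+z) 2 ζ) - G x) := by
      rw [intervalIntegral.integral_sub (hint (x+z) _ _) (_root_.intervalIntegrable_const)]
      rw [intervalIntegral.integral_const, hxz2, smul_eq_mul]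
      ring
    rw [h0, happ, sub_zero, hkey]
    have hbd : ∀ ζ ∈ Set.uIoc (x 2) ((x+z) 2), ‖G (Function.update (x+z) 2 ζ) - G x‖ ≤ c := by
      intro ζ hζ
      have h1 : |ζ - x 2| ≤ |(x+z) 2 - x 2| :=
        abs_sub_le_of_mem_uIcc (Set.uIoc_subset_uIcc hζ)
      have h2 : |(x+z) 2 - x 2| ≤ ‖(x+z) - x‖ := by
        have h5 : ((x+z) - x) 2 = (x+z) 2 - x 2 := rfl
        rw [← h5]
        exact norm_le_pi_norm ((x+z) - x) 2
      have h3 : ‖Function.update (x+z) 2 ζ - x‖ ≤ ‖(x+z) - x‖ :=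
        update_norm_le x (x+z) ζ (h1.trans h2)
      have h4 : ‖(x+z) - x‖ = ‖z‖ := by rw [add_sub_cancel_left]
      have h6 : dist (Function.update (x+z) 2 ζ) x < δ := by
        rw [dist_eq_norm]; exact lt_of_le_of_lt (h3.trans_eq h4) hz'
      have h7 := hGδ h6
      rw [dist_eq_norm] at h7
      exact h7.le
    calc ‖∫ ζ in (x 2)..((x+z) 2), (G (Function.update (x+z) 2 ζ) - G x)‖
        ≤ c * |(x+z) 2 - x 2| :=
          intervalIntegral.norm_integral_le_of_norm_le_const hbd
      _ ≤ c * ‖z‖ := by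
          refine mul_le_mul_of_nonneg_left ?_ hc.le
          have h5 : ((x+z) - x) 2 = (x+z) 2 - x 2 := rfl
          calc |(x+z) 2 - x 2| = ‖((x+z) - x) 2‖ := by rw [h5]; rfl
            _ ≤ ‖(x+z) - x‖ := norm_le_pi_norm _ 2
            _ = ‖z‖ := by rw [add_sub_cancel_left]
  have hAB := hA.add hB
  have heq : (fun y : E3 => (∫ ζ in a..(x 2), G (Function.update y 2 ζ))
      + ∫ ζ in (x 2)..(y 2), G (Function.update y 2 ζ))
      = fun y => ∫ ζ in a..(y 2), G (Function.update y 2 ζ) := by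
    funext y; exact (hsplit y).symm
  rw [← heq]
  exact hAB

lemma differentiable_vint {G : E3 → ℝ} (hG : ContDiff ℝ (⊤:ℕ∞) G) (a : ℝ) :
    Differentiable ℝ (fun y : E3 => ∫ ζ in a..(y 2), G (Function.update y 2 ζ)) :=
  fun x => (hasFDerivAt_vint hG a x).differentiableAt

lemma continuous_vint {G : E3 → ℝ} (hG : ContDiff ℝ (⊤:ℕ∞) G) (a : ℝ) :
    Continuous (fun y : E3 => ∫ ζ in a..(y 2), G (Function.update y 2 ζ)) :=
  (differentiable_vint hG a).continuous

lemma piL_single_horiz (j : Fin 3) (hj : j ≠ 2) :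
    piL (Pi.single j (1:ℝ)) = Pi.single j (1:ℝ) := by
  funext i
  rw [piL_apply]
  rcases eq_or_ne i 2 with rfl | hi
  · rw [if_pos rfl, Pi.single_eq_of_ne (Ne.symm hj)]
  · rw [if_neg hi]

lemma pd_vint_horiz {G : E3 → ℝ} (hG : ContDiff ℝ (⊤:ℕ∞) G) (a : ℝ) (x : E3)
    (j : Fin 3) (hj : j ≠ 2) :
    pd j (fun y : E3 => ∫ ζ in a..(y 2), G (Function.update y 2 ζ)) x
      = ∫ ζ in a..(x 2), pd j G (Function.update x 2 ζ) := by
  have hG' : Continuous (fderiv ℝ G) :=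
    (hG.fderiv_right (m := (⊤:ℕ∞)) (by exact_mod_cast le_top)).continuous
  have hφ : IntervalIntegrable
      (fun ζ => (fderiv ℝ G (Function.update x 2 ζ)).comp piL) volume a (x 2) :=
    (((hG'.clm_comp continuous_const).comp (continuous_update2' x))).intervalIntegrable a (x 2)
  rw [pd, (hasFDerivAt_vint hG a x).fderiv, vder, ContinuousLinearMap.add_apply,
    ContinuousLinearMap.smul_apply, ContinuousLinearMap.intervalIntegral_apply hφ]
  have h2 : (ContinuousLinearMap.proj (R := ℝ) (φ := fun _ : Fin 3 => ℝ) 2)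
      (Pi.single j (1:ℝ)) = 0 := by
    simp only [ContinuousLinearMap.proj_apply]
    exact Pi.single_eq_of_ne (Ne.symm hj) 1
  rw [h2, smul_zero, add_zero]
  congr 1
  funext ζ
  rw [ContinuousLinearMap.comp_apply, piL_single_horiz j hj]
  rfl

lemma pd_vint_vert {G : E3 → ℝ} (hG : ContDiff ℝ (⊤:ℕ∞) G) (a : ℝ) (x : E3) :
    pd 2 (fun y : E3 => ∫ ζ in a..(y 2), G (Function.update y 2 ζ)) x = G x := by
  have hG' : Continuous (fderiv ℝ G) :=
    (hG.fderiv_right (m := (⊤:ℕ∞)) (by exact_mod_cast le_top)).continuous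
  have hφ : IntervalIntegrable
      (fun ζ => (fderiv ℝ G (Function.update x 2 ζ)).comp piL) volume a (x 2) :=
    (((hG'.clm_comp continuous_const).comp (continuous_update2' x))).intervalIntegrable a (x 2)
  rw [pd, (hasFDerivAt_vint hG a x).fderiv, vder, ContinuousLinearMap.add_apply,
    ContinuousLinearMap.smul_apply, ContinuousLinearMap.intervalIntegral_apply hφ]
  have hsingle : piL (Pi.single (2:Fin 3) (1:ℝ)) = 0 := by
    funext i
    rw [piL_apply]
    rcases eq_or_ne i 2 with rfl | hi
    · rw [if_pos rfl]; rfl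
    · rw [if_neg hi, Pi.single_eq_of_ne hi]; rfl
  have h1 : ∀ ζ : ℝ, (fderiv ℝ G (Function.update x 2 ζ)).comp piL
      (Pi.single (2:Fin 3) (1:ℝ)) = 0 := by
    intro ζ
    rw [ContinuousLinearMap.comp_apply, hsingle, map_zero]
  simp only [h1, intervalIntegral.integral_zero, zero_add]
  simp [smul_eq_mul]

lemma contDiff_pd {f : E3 → ℝ} (hf : ContDiff ℝ (⊤:ℕ∞) f) (j : Fin 3) :
    ContDiff ℝ (⊤:ℕ∞) (pd j f) := by
  have h1 : ContDiff ℝ (⊤:ℕ∞) (fderiv ℝ f) :=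
    hf.fderiv_right (m := (⊤:ℕ∞)) (by exact_mod_cast le_top)
  have h2 : pd j f = fun x =>
      (ContinuousLinearMap.apply ℝ ℝ (Pi.single j (1:ℝ) : E3)) (fderiv ℝ f x) := rfl
  rw [h2]
  exact (ContinuousLinearMap.apply ℝ ℝ (Pi.single j (1:ℝ) : E3)).contDiff.comp h1

lemma horizPeriodic_vint {G : E3 → ℝ} (hGp : HorizPeriodic G) (a : ℝ) :
    HorizPeriodic (fun y : E3 => ∫ ζ in a..(y 2), G (Function.update y 2 ζ)) := by
  have hupd : ∀ (j : Fin 3), j ≠ 2 → ∀ (x : E3) (ζ : ℝ),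
      Function.update (x + (Pi.single j 1 : E3)) 2 ζ
        = Function.update x 2 ζ + (Pi.single j 1 : E3) := by
    intro j hj x ζ
    funext i
    rcases eq_or_ne i 2 with rfl | hi
    · simp [Function.update_self, Pi.single_eq_of_ne (Ne.symm hj)]
    · simp [Function.update_of_ne hi]
  have h2 : ∀ (j : Fin 3), j ≠ 2 → ∀ x : E3, (x + (Pi.single j 1 : E3)) 2 = x 2 := by
    intro j hj x
    simp [Pi.single_eq_of_ne (Ne.symm hj)]
  intro x
  constructor
  · show (∫ ζ in a..((x + (Pi.single 0 1 : E3)) 2),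
        G (Function.update (x + (Pi.single 0 1 : E3)) 2 ζ))
      = ∫ ζ in a..(x 2), G (Function.update x 2 ζ)
    rw [h2 0 (by decide) x]
    refine intervalIntegral.integral_congr fun ζ _ => ?_
    rw [hupd 0 (by decide) x ζ]
    exact (hGp _).1
  · show (∫ ζ in a..((x + (Pi.single 1 1 : E3)) 2),
        G (Function.update (x + (Pi.single 1 1 : E3)) 2 ζ))
      = ∫ ζ in a..(x 2), G (Function.update x 2 ζ)
    rw [h2 1 (by decide) x]
    refine intervalIntegral.integral_congr fun ζ _ => ?_
    rw [hupd 1 (by decide) x ζ]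
    exact (hGp _).2

lemma hasDerivAt_comp_update {f : E3 → ℝ} (hf : Differentiable ℝ f) (x : E3) (ζ : ℝ) :
    HasDerivAt (fun t : ℝ => f (Function.update x 2 t))
      (pd 2 f (Function.update x 2 ζ)) ζ := by
  have haff : HasDerivAt (fun t : ℝ => piL x + t • (Pi.single (2:Fin 3) (1:ℝ) : E3))
      (Pi.single (2:Fin 3) (1:ℝ) : E3) ζ := by
    simpa using ((hasDerivAt_id ζ).smul_const (Pi.single (2:Fin 3) (1:ℝ) : E3)).const_add (piL x)
  have := (hf (Function.update x 2 ζ)).hasFDerivAt.comp_hasDerivAt ζ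
    (by simpa [← update_eq] using haff)
  simpa [← update_eq, pd, Function.comp_def] using this

lemma pd_add {f g : E3 → ℝ} {x : E3} (hf : DifferentiableAt ℝ f x)
    (hg : DifferentiableAt ℝ g x) (j : Fin 3) :
    pd j (fun y => f y + g y) x = pd j f x + pd j g x := by
  simp only [pd]
  rw [fderiv_fun_add hf hg]
  rfl

lemma pd_neg {f : E3 → ℝ} {x : E3} (j : Fin 3) :
    pd j (fun y => -(f y)) x = -(pd j f x) := by
  simp only [pd]
  rw [fderiv_fun_neg]
  rfl

lemma pd_mul {f g : E3 → ℝ} {x : E3} (hf : DifferentiableAt ℝ f x)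
    (hg : DifferentiableAt ℝ g x) (j : Fin 3) :
    pd j (fun y => f y * g y) x = pd j f x * g x + f x * pd j g x := by
  simp only [pd]
  rw [fderiv_fun_mul hf hg]
  simp [smul_eq_mul]
  ring

lemma pd_sq {f : E3 → ℝ} {x : E3} (hf : DifferentiableAt ℝ f x) (j : Fin 3) :
    pd j (fun y => f y ^ 2) x = 2 * f x * pd j f x := by
  have h : (fun y => f y ^ 2) = fun y => f y * f y := by
    funext y; ring
  rw [h, pd_mul hf hf]
  ring

end Aux
section IBP

open intervalIntegral

lemma wv_upd (h : ℝ) (v : Fin 2 → E3 → ℝ) (x : E3) (t : ℝ) :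
    wv h v (Function.update x 2 t)
      = -(∫ s in (-h)..t, divH v (Function.update x 2 s)) := by
  show -(∫ s in (-h)..((Function.update x 2 t) 2),
      divH v (Function.update (Function.update x 2 t) 2 s)) = _
  simp only [Function.update_self, Function.update_idem]

lemma contDiff_divH {v : Fin 2 → E3 → ℝ} (hv : ∀ i, ContDiff ℝ (⊤:ℕ∞) (v i)) :
    ContDiff ℝ (⊤:ℕ∞) (divH v) := by
  show ContDiff ℝ (⊤:ℕ∞) (fun x => pd 0 (v 0) x + pd 1 (v 1) x)
  exact (contDiff_pd (hv 0) 0).add (contDiff_pd (hv 1) 1)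

lemma continuous_wv (h : ℝ) {v : Fin 2 → E3 → ℝ} (hv : ∀ i, ContDiff ℝ (⊤:ℕ∞) (v i)) :
    Continuous (wv h v) := by
  show Continuous (fun y : E3 => -(∫ ζ in (-h)..(y 2), divH v (Function.update y 2 ζ)))
  exact (continuous_vint (contDiff_divH hv) (-h)).neg

lemma differentiable_wv (h : ℝ) {v : Fin 2 → E3 → ℝ} (hv : ∀ i, ContDiff ℝ (⊤:ℕ∞) (v i)) :
    Differentiable ℝ (wv h v) := by
  show Differentiable ℝ (fun y : E3 => -(∫ ζ in (-h)..(y 2), divH v (Function.update y 2 ζ)))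
  exact (differentiable_vint (contDiff_divH hv) (-h)).neg

lemma pd2_wv (h : ℝ) {v : Fin 2 → E3 → ℝ} (hv : ∀ i, ContDiff ℝ (⊤:ℕ∞) (v i)) (x : E3) :
    pd 2 (wv h v) x = -(divH v x) := by
  have : wv h v = fun y : E3 => -(∫ ζ in (-h)..(y 2), divH v (Function.update y 2 ζ)) := rfl
  rw [this, pd_neg, pd_vint_vert (contDiff_divH hv)]

lemma ibp_identity (h : ℝ) (v : Fin 2 → E3 → ℝ) (hv_smooth : ∀ i, ContDiff ℝ (⊤:ℕ∞) (v i))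
    (θ : E3 → ℝ) (hθ_smooth : ContDiff ℝ (⊤:ℕ∞) θ) (x : E3) :
    (∫ ζ in (-h)..(x 2), adv3 v (wv h v) θ (Function.update x 2 ζ))
      = (∫ ζ in (-h)..(x 2), advH v θ (Function.update x 2 ζ))
        + wv h v x * θ x
        + ∫ ζ in (-h)..(x 2), divH v (Function.update x 2 ζ) * θ (Function.update x 2 ζ) := by
  have hθd : Differentiable ℝ θ := hθ_smooth.differentiable (by simp)
  have hdivH := contDiff_divH hv_smooth
  have hwc := continuous_wv h hv_smooth
  have hupd := continuous_update2' x
  have hadvθc : Continuous (advH v θ) := by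
    show Continuous (fun y => v 0 y * pd 0 θ y + v 1 y * pd 1 θ y)
    exact (((hv_smooth 0).continuous).mul (contDiff_pd hθ_smooth 0).continuous).add
      (((hv_smooth 1).continuous).mul (contDiff_pd hθ_smooth 1).continuous)
  have hI1 : IntervalIntegrable (fun ζ => advH v θ (Function.update x 2 ζ))
      volume (-h) (x 2) := (hadvθc.comp hupd).intervalIntegrable _ _
  have hI2 : IntervalIntegrable
      (fun ζ => wv h v (Function.update x 2 ζ) * pd 2 θ (Function.update x 2 ζ))
      volume (-h) (x 2) :=
    ((hwc.comp hupd).mul ((contDiff_pd hθ_smooth 2).continuous.comp hupd)).intervalIntegrable _ _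
  have h1 : ∀ ζ ∈ Set.uIcc (-h) (x 2), adv3 v (wv h v) θ (Function.update x 2 ζ)
      = advH v θ (Function.update x 2 ζ)
        + wv h v (Function.update x 2 ζ) * pd 2 θ (Function.update x 2 ζ) := fun ζ _ => rfl
  rw [intervalIntegral.integral_congr h1, intervalIntegral.integral_add hI1 hI2]
  have hu : ∀ t ∈ Set.uIcc (-h) (x 2), HasDerivAt (fun t => wv h v (Function.update x 2 t))
      (-(divH v (Function.update x 2 t))) t := by
    intro t _
    have heq : (fun t : ℝ => wv h v (Function.update x 2 t))
        = fun t => -(∫ s in (-h)..t, divH v (Function.update x 2 s)) :=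
      funext (wv_upd h v x)
    rw [heq]
    exact ((hdivH.continuous.comp hupd).integral_hasStrictDerivAt (-h) t).hasDerivAt.neg
  have hvder : ∀ t ∈ Set.uIcc (-h) (x 2), HasDerivAt (fun t => θ (Function.update x 2 t))
      (pd 2 θ (Function.update x 2 t)) t := fun t _ => hasDerivAt_comp_update hθd x t
  have huint : IntervalIntegrable (fun t => -(divH v (Function.update x 2 t)))
      volume (-h) (x 2) := ((hdivH.continuous.comp hupd).neg).intervalIntegrable _ _
  have hvint : IntervalIntegrable (fun t => pd 2 θ (Function.update x 2 t))
      volume (-h) (x 2) :=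
    ((contDiff_pd hθ_smooth 2).continuous.comp hupd).intervalIntegrable _ _
  have hIBP := intervalIntegral.integral_mul_deriv_eq_deriv_mul hu hvder huint hvint
  have e1 : Function.update x 2 (x 2) = x := Function.update_eq_self 2 x
  have e2 : wv h v (Function.update x 2 (-h)) = 0 := by
    rw [wv_upd, intervalIntegral.integral_same, neg_zero]
  rw [e1] at hIBP
  have e3 : (∫ t in (-h)..(x 2), -(divH v (Function.update x 2 t)) * θ (Function.update x 2 t))
      = -∫ t in (-h)..(x 2), divH v (Function.update x 2 t) * θ (Function.update x 2 t) := by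
    rw [← intervalIntegral.integral_neg]
    congr 1
    funext t
    ring
  rw [hIBP, e2, e3]
  ring

end IBP
section Div

open intervalIntegral

lemma insertNth_add_single (i : Fin 3) (c : ℝ) (y : Fin 2 → ℝ) :
    Fin.insertNth (α := fun _ : Fin 3 => ℝ) i (c+1) y
      = Fin.insertNth (α := fun _ : Fin 3 => ℝ) i c y + (Pi.single i 1 : E3) := by
  funext j
  rcases eq_or_ne j i with rfl | hj
  · rw [Fin.insertNth_apply_same, Pi.add_apply, Fin.insertNth_apply_same, Pi.single_eq_same]
  · obtain ⟨k, hk⟩ := Fin.exists_succAbove_eq hj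
    rw [← hk, Fin.insertNth_apply_succAbove, Pi.add_apply, Fin.insertNth_apply_succAbove,
      Pi.single_eq_of_ne (Fin.succAbove_ne i k), add_zero]

lemma divergence_zero (h : ℝ) (hh : 0 < h)
    (v : Fin 2 → E3 → ℝ)
    (hv_smooth : ∀ i, ContDiff ℝ (⊤ : ℕ∞) (v i))
    (hv_per : ∀ i, HorizPeriodic (v i))
    (θ : E3 → ℝ)
    (hθ_smooth : ContDiff ℝ (⊤ : ℕ∞) θ) (hθ_per : HorizPeriodic θ)
    (hdiv : ∀ x : E3, (∫ ζ in (-h)..(0:ℝ), divH v (Function.update x 2 ζ)) = 0) :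
    (∫ x in Box h,
      (2 * vint h θ x * (v 0 x ^ 2 + v 1 x ^ 2) * (advH v (vint h θ) x + wv h v x * θ x)
        + 2 * vint h θ x ^ 2
          * (v 0 x * adv3 v (wv h v) (v 0) x + v 1 x * adv3 v (wv h v) (v 1) x))) = 0 := by
  classical
  have hvd : ∀ i, Differentiable ℝ (v i) := fun i => (hv_smooth i).differentiable (by simp)
  have hvc : ∀ i, Continuous (v i) := fun i => (hv_smooth i).continuous
  have hθc : Continuous θ := hθ_smooth.continuous
  have hΘdiff : Differentiable ℝ (vint h θ) := differentiable_vint hθ_smooth (-h)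
  have hΘc : Continuous (vint h θ) := hΘdiff.continuous
  have hwdiff := differentiable_wv h hv_smooth
  have hwc := continuous_wv h hv_smooth
  have hΘ2 : ∀ x, pd 2 (vint h θ) x = θ x := fun x => pd_vint_vert hθ_smooth (-h) x
  have hw2 := pd2_wv h hv_smooth
  set F : E3 → ℝ := fun y => vint h θ y ^ 2 * (v 0 y ^ 2 + v 1 y ^ 2) with hF_def
  have hFdiff : Differentiable ℝ F :=
    (hΘdiff.pow 2).mul (((hvd 0).pow 2).add ((hvd 1).pow 2))
  have hFc : Continuous F := hFdiff.continuous
  have hΘper : HorizPeriodic (vint h θ) := horizPeriodic_vint hθ_per (-h)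
  have hFper : ∀ z : E3, F (z + (Pi.single 0 1 : E3)) = F z
      ∧ F (z + (Pi.single 1 1 : E3)) = F z := by
    intro z
    constructor
    · simp only [hF_def]
      rw [(hΘper z).1, (hv_per 0 z).1, (hv_per 1 z).1]
    · simp only [hF_def]
      rw [(hΘper z).2, (hv_per 0 z).2, (hv_per 1 z).2]
  set f : Fin 3 → E3 → ℝ :=
    ![fun y => v 0 y * F y, fun y => v 1 y * F y, fun y => wv h v y * F y] with hf_def
  have hf0 : f 0 = fun y => v 0 y * F y := rfl
  have hf1 : f 1 = fun y => v 1 y * F y := rfl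
  have hf2 : f 2 = fun y => wv h v y * F y := rfl
  have hfd : ∀ (i : Fin 3) (x : E3), DifferentiableAt ℝ (f i) x := by
    intro i x
    fin_cases i
    · exact (hvd 0 x).mul (hFdiff x)
    · exact (hvd 1 x).mul (hFdiff x)
    · exact (hwdiff x).mul (hFdiff x)
  -- partial derivatives of F
  have hpdF : ∀ (j : Fin 3) (x : E3), pd j F x
      = 2 * vint h θ x * pd j (vint h θ) x * (v 0 x ^ 2 + v 1 x ^ 2)
        + vint h θ x ^ 2 * (2 * v 0 x * pd j (v 0) x + 2 * v 1 x * pd j (v 1) x) := by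
    intro j x
    rw [hF_def]
    simp only [pd_mul ((hΘdiff x).fun_pow 2) (((hvd 0 x).fun_pow 2).fun_add ((hvd 1 x).fun_pow 2)) j,
      pd_sq (hΘdiff x), pd_add ((hvd 0 x).fun_pow 2) ((hvd 1 x).fun_pow 2),
      pd_sq (hvd 0 x), pd_sq (hvd 1 x)]
    try ring
  -- the divergence sum
  have hsum : ∀ x : E3, (∑ i : Fin 3, fderiv ℝ (f i) x (Pi.single i 1))
      = 2 * vint h θ x * (v 0 x ^ 2 + v 1 x ^ 2) * (advH v (vint h θ) x + wv h v x * θ x)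
        + 2 * vint h θ x ^ 2
          * (v 0 x * adv3 v (wv h v) (v 0) x + v 1 x * adv3 v (wv h v) (v 1) x) := by
    intro x
    rw [Fin.sum_univ_three]
    have e0 : fderiv ℝ (f 0) x (Pi.single 0 1) = pd 0 (f 0) x := rfl
    have e1 : fderiv ℝ (f 1) x (Pi.single 1 1) = pd 1 (f 1) x := rfl
    have e2 : fderiv ℝ (f 2) x (Pi.single 2 1) = pd 2 (f 2) x := rfl
    rw [e0, e1, e2, hf0, hf1, hf2]
    rw [pd_mul (hvd 0 x) (hFdiff x), pd_mul (hvd 1 x) (hFdiff x), pd_mul (hwdiff x) (hFdiff x)]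
    rw [hpdF 0 x, hpdF 1 x, hpdF 2 x, hΘ2 x, hw2 x]
    have ea : advH v (vint h θ) x
        = v 0 x * pd 0 (vint h θ) x + v 1 x * pd 1 (vint h θ) x := rfl
    have eb0 : adv3 v (wv h v) (v 0) x
        = v 0 x * pd 0 (v 0) x + v 1 x * pd 1 (v 0) x + wv h v x * pd 2 (v 0) x := rfl
    have eb1 : adv3 v (wv h v) (v 1) x
        = v 0 x * pd 0 (v 1) x + v 1 x * pd 1 (v 1) x + wv h v x * pd 2 (v 1) x := rfl
    have ec : divH v x = pd 0 (v 0) x + pd 1 (v 1) x := rfl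
    rw [ea, eb0, eb1, ec]
    ring
  -- continuity of the divergence
  have hpd0Θc : Continuous (fun x : E3 => pd 0 (vint h θ) x) := by
    have e : (fun x : E3 => pd 0 (vint h θ) x)
        = fun x => ∫ ζ in (-h)..(x 2), pd 0 θ (Function.update x 2 ζ) :=
      funext fun x => pd_vint_horiz hθ_smooth (-h) x 0 (by decide)
    rw [e]; exact continuous_vint (contDiff_pd hθ_smooth 0) (-h)
  have hpd1Θc : Continuous (fun x : E3 => pd 1 (vint h θ) x) := by
    have e : (fun x : E3 => pd 1 (vint h θ) x)
        = fun x => ∫ ζ in (-h)..(x 2), pd 1 θ (Function.update x 2 ζ) :=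
      funext fun x => pd_vint_horiz hθ_smooth (-h) x 1 (by decide)
    rw [e]; exact continuous_vint (contDiff_pd hθ_smooth 1) (-h)
  have hadvΘc : Continuous (fun x : E3 => advH v (vint h θ) x) := by
    show Continuous (fun x : E3 => v 0 x * pd 0 (vint h θ) x + v 1 x * pd 1 (vint h θ) x)
    exact ((hvc 0).mul hpd0Θc).add ((hvc 1).mul hpd1Θc)
  have hadv3c : ∀ i : Fin 2, Continuous (fun x : E3 => adv3 v (wv h v) (v i) x) := by
    intro i
    show Continuous (fun x : E3 => v 0 x * pd 0 (v i) x + v 1 x * pd 1 (v i) x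
      + wv h v x * pd 2 (v i) x)
    exact (((hvc 0).mul (contDiff_pd (hv_smooth i) 0).continuous).add
      ((hvc 1).mul (contDiff_pd (hv_smooth i) 1).continuous)).add
      (hwc.mul (contDiff_pd (hv_smooth i) 2).continuous)
  have hcont_div : Continuous (fun x : E3 =>
      2 * vint h θ x * (v 0 x ^ 2 + v 1 x ^ 2) * (advH v (vint h θ) x + wv h v x * θ x)
        + 2 * vint h θ x ^ 2
          * (v 0 x * adv3 v (wv h v) (v 0) x + v 1 x * adv3 v (wv h v) (v 1) x)) := by
    exact (((continuous_const.mul hΘc).mul (((hvc 0).pow 2).add ((hvc 1).pow 2))).mul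
        (hadvΘc.add (hwc.mul hθc))).add
      ((continuous_const.mul (hΘc.pow 2)).mul
        (((hvc 0).mul (hadv3c 0)).add ((hvc 1).mul (hadv3c 1))))
  -- hypotheses of the divergence theorem
  have hle : (![0,0,-h] : E3) ≤ ![1,1,0] := by
    intro i
    fin_cases i <;> (simp; try linarith)
  have Hc : ∀ i, ContinuousOn (f i) (Set.Icc (![0,0,-h] : E3) ![1,1,0]) := by
    intro i
    fin_cases i
    · exact ((hvc 0).mul hFc).continuousOn
    · exact ((hvc 1).mul hFc).continuousOn
    · exact (hwc.mul hFc).continuousOn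
  have Hd : ∀ x ∈ (Set.pi Set.univ fun i =>
        Set.Ioo ((![0,0,-h] : E3) i) ((![1,1,0] : E3) i)) \ (∅ : Set E3),
      ∀ i, HasFDerivAt (f i) (fderiv ℝ (f i) x) x :=
    fun x _ i => (hfd i x).hasFDerivAt
  have Hi : IntegrableOn (fun x : E3 => ∑ i : Fin 3, fderiv ℝ (f i) x (Pi.single i 1))
      (Set.Icc (![0,0,-h] : E3) ![1,1,0]) := by
    rw [funext hsum]
    exact hcont_div.continuousOn.integrableOn_compact isCompact_Icc
  have H := MeasureTheory.integral_divergence_of_hasFDerivAt_off_countable'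
      (a := ![0,0,-h]) (b := ![1,1,0]) hle f (fun i x => fderiv ℝ (f i) x) ∅
      Set.countable_empty Hc Hd Hi
  have hL : (∫ x in Box h,
      (2 * vint h θ x * (v 0 x ^ 2 + v 1 x ^ 2) * (advH v (vint h θ) x + wv h v x * θ x)
        + 2 * vint h θ x ^ 2
          * (v 0 x * adv3 v (wv h v) (v 0) x + v 1 x * adv3 v (wv h v) (v 1) x)))
      = ∫ x in Set.Icc (![0,0,-h] : E3) ![1,1,0],
          ∑ i : Fin 3, fderiv ℝ (f i) x (Pi.single i 1) :=
    MeasureTheory.setIntegral_congr_fun measurableSet_Icc fun x _ => (hsum x).symm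
  rw [hL, H]
  -- the boundary terms vanish
  rw [Fin.sum_univ_three]
  have hface0 : (∫ y in Set.Icc ((![0,0,-h] : E3) ∘ (0:Fin 3).succAbove)
        ((![1,1,0] : E3) ∘ (0:Fin 3).succAbove),
        f 0 (Fin.insertNth 0 ((![1,1,0] : E3) 0) y))
      = ∫ y in Set.Icc ((![0,0,-h] : E3) ∘ (0:Fin 3).succAbove)
        ((![1,1,0] : E3) ∘ (0:Fin 3).succAbove),
        f 0 (Fin.insertNth 0 ((![0,0,-h] : E3) 0) y) := by
    refine MeasureTheory.setIntegral_congr_fun measurableSet_Icc fun y _ => ?_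
    rw [show ((![1,1,0] : E3) 0) = (0:ℝ) + 1 by norm_num,
      show ((![0,0,-h] : E3) 0) = (0:ℝ) by norm_num, insertNth_add_single]
    rw [hf0]
    show v 0 _ * F _ = v 0 _ * F _
    rw [(hv_per 0 _).1, (hFper _).1]
  have hface1 : (∫ y in Set.Icc ((![0,0,-h] : E3) ∘ (1:Fin 3).succAbove)
        ((![1,1,0] : E3) ∘ (1:Fin 3).succAbove),
        f 1 (Fin.insertNth 1 ((![1,1,0] : E3) 1) y))
      = ∫ y in Set.Icc ((![0,0,-h] : E3) ∘ (1:Fin 3).succAbove)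
        ((![1,1,0] : E3) ∘ (1:Fin 3).succAbove),
        f 1 (Fin.insertNth 1 ((![0,0,-h] : E3) 1) y) := by
    refine MeasureTheory.setIntegral_congr_fun measurableSet_Icc fun y _ => ?_
    rw [show ((![1,1,0] : E3) 1) = (0:ℝ) + 1 by norm_num,
      show ((![0,0,-h] : E3) 1) = (0:ℝ) by norm_num, insertNth_add_single]
    rw [hf1]
    show v 1 _ * F _ = v 1 _ * F _
    rw [(hv_per 1 _).2, (hFper _).2]
  have hwzero : ∀ z : E3, z 2 = 0 → wv h v z = 0 := by
    intro z hz
    have e : wv h v z = -(∫ ζ in (-h)..(z 2), divH v (Function.update z 2 ζ)) := rfl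
    rw [e, hz, hdiv z, neg_zero]
  have hwbot : ∀ z : E3, z 2 = -h → wv h v z = 0 := by
    intro z hz
    have e : wv h v z = -(∫ ζ in (-h)..(z 2), divH v (Function.update z 2 ζ)) := rfl
    rw [e, hz, intervalIntegral.integral_same, neg_zero]
  have hface2a : (∫ y in Set.Icc ((![0,0,-h] : E3) ∘ (2:Fin 3).succAbove)
        ((![1,1,0] : E3) ∘ (2:Fin 3).succAbove),
        f 2 (Fin.insertNth 2 ((![1,1,0] : E3) 2) y)) = 0 := by
    rw [show (∫ y in Set.Icc ((![0,0,-h] : E3) ∘ (2:Fin 3).succAbove)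
        ((![1,1,0] : E3) ∘ (2:Fin 3).succAbove),
        f 2 (Fin.insertNth 2 ((![1,1,0] : E3) 2) y))
      = ∫ y in Set.Icc ((![0,0,-h] : E3) ∘ (2:Fin 3).succAbove)
        ((![1,1,0] : E3) ∘ (2:Fin 3).succAbove), (0:ℝ) from
      MeasureTheory.setIntegral_congr_fun measurableSet_Icc fun y _ => ?_]
    · simp
    · rw [hf2]
      show wv h v _ * F _ = 0
      rw [hwzero _ (by simp [show ((![1,1,0] : E3) 2) = (0:ℝ) from rfl]), zero_mul]
  have hface2b : (∫ y in Set.Icc ((![0,0,-h] : E3) ∘ (2:Fin 3).succAbove)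
        ((![1,1,0] : E3) ∘ (2:Fin 3).succAbove),
        f 2 (Fin.insertNth 2 ((![0,0,-h] : E3) 2) y)) = 0 := by
    rw [show (∫ y in Set.Icc ((![0,0,-h] : E3) ∘ (2:Fin 3).succAbove)
        ((![1,1,0] : E3) ∘ (2:Fin 3).succAbove),
        f 2 (Fin.insertNth 2 ((![0,0,-h] : E3) 2) y))
      = ∫ y in Set.Icc ((![0,0,-h] : E3) ∘ (2:Fin 3).succAbove)
        ((![1,1,0] : E3) ∘ (2:Fin 3).succAbove), (0:ℝ) from
      MeasureTheory.setIntegral_congr_fun measurableSet_Icc fun y _ => ?_]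
    · simp
    · rw [hf2]
      show wv h v _ * F _ = 0
      rw [hwbot _ (by simp [show ((![0,0,-h] : E3) 2) = -h from rfl]), zero_mul]
  rw [hface0, hface1, hface2a, hface2b]
  ring

end Div
/-- Lemma 6.2, cancellation with the hydrostatic vertical velocity. -/
theorem statement1
    (h : ℝ) (hh : 0 < h)
    (v : Fin 2 → (Fin 3 → ℝ) → ℝ)
    (hv_smooth : ∀ i, ContDiff ℝ (⊤ : ℕ∞) (v i))
    (hv_per : ∀ i, HorizPeriodic (v i))
    (θ : (Fin 3 → ℝ) → ℝ)
    (hθ_smooth : ContDiff ℝ (⊤ : ℕ∞) θ) (hθ_per : HorizPeriodic θ)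
    (hdiv : ∀ x : Fin 3 → ℝ, (∫ ζ in (-h)..(0:ℝ), divH v (Function.update x 2 ζ)) = 0) :
    (∫ x in Box h, (vint h θ x) ^ 2 * (∑ i, v i x * adv3 v (wv h v) (v i) x))
      + (∫ x in Box h,
          (∑ i, v i x ^ 2) * vint h θ x
            * (∫ ζ in (-h)..(x 2), adv3 v (wv h v) θ (Function.update x 2 ζ)))
    = ∫ x in Box h,
        (∑ i, v i x ^ 2) * vint h θ x
          * ((∫ ζ in (-h)..(x 2), advH v θ (Function.update x 2 ζ))
              - advH v (vint h θ) x
              + (∫ ζ in (-h)..(x 2),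
                  divH v (Function.update x 2 ζ) * θ (Function.update x 2 ζ))) := by
  have hvc : ∀ i, Continuous (v i) := fun i => (hv_smooth i).continuous
  have hθc : Continuous θ := hθ_smooth.continuous
  have hΘc : Continuous (vint h θ) := (differentiable_vint hθ_smooth (-h)).continuous
  have hwc := continuous_wv h hv_smooth
  have hpd0Θc : Continuous (fun x : E3 => pd 0 (vint h θ) x) := by
    have e : (fun x : E3 => pd 0 (vint h θ) x)
        = fun x => ∫ ζ in (-h)..(x 2), pd 0 θ (Function.update x 2 ζ) :=
      funext fun x => pd_vint_horiz hθ_smooth (-h) x 0 (by decide)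
    rw [e]; exact continuous_vint (contDiff_pd hθ_smooth 0) (-h)
  have hpd1Θc : Continuous (fun x : E3 => pd 1 (vint h θ) x) := by
    have e : (fun x : E3 => pd 1 (vint h θ) x)
        = fun x => ∫ ζ in (-h)..(x 2), pd 1 θ (Function.update x 2 ζ) :=
      funext fun x => pd_vint_horiz hθ_smooth (-h) x 1 (by decide)
    rw [e]; exact continuous_vint (contDiff_pd hθ_smooth 1) (-h)
  have hadvΘc : Continuous (fun x : E3 => advH v (vint h θ) x) := by
    show Continuous (fun x : E3 => v 0 x * pd 0 (vint h θ) x + v 1 x * pd 1 (vint h θ) x)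
    exact ((hvc 0).mul hpd0Θc).add ((hvc 1).mul hpd1Θc)
  have hadv3c : ∀ i : Fin 2, Continuous (fun x : E3 => adv3 v (wv h v) (v i) x) := by
    intro i
    show Continuous (fun x : E3 => v 0 x * pd 0 (v i) x + v 1 x * pd 1 (v i) x
      + wv h v x * pd 2 (v i) x)
    exact (((hvc 0).mul (contDiff_pd (hv_smooth i) 0).continuous).add
      ((hvc 1).mul (contDiff_pd (hv_smooth i) 1).continuous)).add
      (hwc.mul (contDiff_pd (hv_smooth i) 2).continuous)
  have hIadvc : Continuous (fun x : E3 =>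
      ∫ ζ in (-h)..(x 2), advH v θ (Function.update x 2 ζ)) := by
    have hs : ContDiff ℝ (⊤:ℕ∞) (advH v θ) := by
      show ContDiff ℝ (⊤:ℕ∞) (fun x => v 0 x * pd 0 θ x + v 1 x * pd 1 θ x)
      exact ((hv_smooth 0).mul (contDiff_pd hθ_smooth 0)).add
        ((hv_smooth 1).mul (contDiff_pd hθ_smooth 1))
    exact continuous_vint hs (-h)
  have hIdivc : Continuous (fun x : E3 =>
      ∫ ζ in (-h)..(x 2), divH v (Function.update x 2 ζ) * θ (Function.update x 2 ζ)) :=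
    continuous_vint ((contDiff_divH hv_smooth).mul hθ_smooth) (-h)
  -- integrable pieces
  have hiP1 : IntegrableOn (fun x : E3 => vint h θ x ^ 2
      * (v 0 x * adv3 v (wv h v) (v 0) x + v 1 x * adv3 v (wv h v) (v 1) x)) (Box h) :=
    (((hΘc.pow 2).mul (((hvc 0).mul (hadv3c 0)).add
      ((hvc 1).mul (hadv3c 1)))).continuousOn).integrableOn_compact isCompact_Icc
  have hiP2 : IntegrableOn (fun x : E3 => (v 0 x ^ 2 + v 1 x ^ 2) * vint h θ x
      * ((∫ ζ in (-h)..(x 2), advH v θ (Function.update x 2 ζ)) + wv h v x * θ x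
        + ∫ ζ in (-h)..(x 2), divH v (Function.update x 2 ζ) * θ (Function.update x 2 ζ)))
      (Box h) :=
    (((((hvc 0).pow 2).add ((hvc 1).pow 2)).mul hΘc).mul
      ((hIadvc.add (hwc.mul hθc)).add hIdivc)).continuousOn.integrableOn_compact isCompact_Icc
  have hiP3 : IntegrableOn (fun x : E3 => (v 0 x ^ 2 + v 1 x ^ 2) * vint h θ x
      * ((∫ ζ in (-h)..(x 2), advH v θ (Function.update x 2 ζ)) - advH v (vint h θ) x
        + ∫ ζ in (-h)..(x 2), divH v (Function.update x 2 ζ) * θ (Function.update x 2 ζ)))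
      (Box h) :=
    (((((hvc 0).pow 2).add ((hvc 1).pow 2)).mul hΘc).mul
      ((hIadvc.sub hadvΘc).add hIdivc)).continuousOn.integrableOn_compact isCompact_Icc
  have hiD : IntegrableOn (fun x : E3 =>
      2 * vint h θ x * (v 0 x ^ 2 + v 1 x ^ 2) * (advH v (vint h θ) x + wv h v x * θ x)
        + 2 * vint h θ x ^ 2
          * (v 0 x * adv3 v (wv h v) (v 0) x + v 1 x * adv3 v (wv h v) (v 1) x)) (Box h) :=
    ((((continuous_const.mul hΘc).mul (((hvc 0).pow 2).add ((hvc 1).pow 2))).mul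
        (hadvΘc.add (hwc.mul hθc))).add
      ((continuous_const.mul (hΘc.pow 2)).mul
        (((hvc 0).mul (hadv3c 0)).add
          ((hvc 1).mul (hadv3c 1))))).continuousOn.integrableOn_compact isCompact_Icc
  -- rewrite the three statement integrals
  have hP1 : (∫ x in Box h, (vint h θ x) ^ 2 * (∑ i, v i x * adv3 v (wv h v) (v i) x))
      = ∫ x in Box h, vint h θ x ^ 2
          * (v 0 x * adv3 v (wv h v) (v 0) x + v 1 x * adv3 v (wv h v) (v 1) x) :=
    MeasureTheory.setIntegral_congr_fun measurableSet_Icc fun x _ => by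
      rw [Fin.sum_univ_two]
  have hP2 : (∫ x in Box h, (∑ i, v i x ^ 2) * vint h θ x
        * (∫ ζ in (-h)..(x 2), adv3 v (wv h v) θ (Function.update x 2 ζ)))
      = ∫ x in Box h, (v 0 x ^ 2 + v 1 x ^ 2) * vint h θ x
          * ((∫ ζ in (-h)..(x 2), advH v θ (Function.update x 2 ζ)) + wv h v x * θ x
            + ∫ ζ in (-h)..(x 2),
                divH v (Function.update x 2 ζ) * θ (Function.update x 2 ζ)) :=
    MeasureTheory.setIntegral_congr_fun measurableSet_Icc fun x _ => by
      rw [Fin.sum_univ_two, ibp_identity h v hv_smooth θ hθ_smooth x]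
  have hP3 : (∫ x in Box h, (∑ i, v i x ^ 2) * vint h θ x
        * ((∫ ζ in (-h)..(x 2), advH v θ (Function.update x 2 ζ))
            - advH v (vint h θ) x
            + (∫ ζ in (-h)..(x 2),
                divH v (Function.update x 2 ζ) * θ (Function.update x 2 ζ))))
      = ∫ x in Box h, (v 0 x ^ 2 + v 1 x ^ 2) * vint h θ x
          * ((∫ ζ in (-h)..(x 2), advH v θ (Function.update x 2 ζ)) - advH v (vint h θ) x
            + ∫ ζ in (-h)..(x 2),
                divH v (Function.update x 2 ζ) * θ (Function.update x 2 ζ)) :=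
    MeasureTheory.setIntegral_congr_fun measurableSet_Icc fun x _ => by
      rw [Fin.sum_univ_two]
  rw [hP1, hP2, hP3]
  have key : ∀ x : E3, vint h θ x ^ 2
        * (v 0 x * adv3 v (wv h v) (v 0) x + v 1 x * adv3 v (wv h v) (v 1) x)
      + (v 0 x ^ 2 + v 1 x ^ 2) * vint h θ x
        * ((∫ ζ in (-h)..(x 2), advH v θ (Function.update x 2 ζ)) + wv h v x * θ x
          + ∫ ζ in (-h)..(x 2), divH v (Function.update x 2 ζ) * θ (Function.update x 2 ζ))
      = 2⁻¹ * (2 * vint h θ x * (v 0 x ^ 2 + v 1 x ^ 2)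
            * (advH v (vint h θ) x + wv h v x * θ x)
          + 2 * vint h θ x ^ 2
            * (v 0 x * adv3 v (wv h v) (v 0) x + v 1 x * adv3 v (wv h v) (v 1) x))
        + (v 0 x ^ 2 + v 1 x ^ 2) * vint h θ x
          * ((∫ ζ in (-h)..(x 2), advH v θ (Function.update x 2 ζ)) - advH v (vint h θ) x
            + ∫ ζ in (-h)..(x 2),
                divH v (Function.update x 2 ζ) * θ (Function.update x 2 ζ)) := by
    intro x
    ring
  calc (∫ x in Box h, vint h θ x ^ 2
          * (v 0 x * adv3 v (wv h v) (v 0) x + v 1 x * adv3 v (wv h v) (v 1) x))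
        + ∫ x in Box h, (v 0 x ^ 2 + v 1 x ^ 2) * vint h θ x
          * ((∫ ζ in (-h)..(x 2), advH v θ (Function.update x 2 ζ)) + wv h v x * θ x
            + ∫ ζ in (-h)..(x 2), divH v (Function.update x 2 ζ) * θ (Function.update x 2 ζ))
      = ∫ x in Box h, (vint h θ x ^ 2
          * (v 0 x * adv3 v (wv h v) (v 0) x + v 1 x * adv3 v (wv h v) (v 1) x)
        + (v 0 x ^ 2 + v 1 x ^ 2) * vint h θ x
          * ((∫ ζ in (-h)..(x 2), advH v θ (Function.update x 2 ζ)) + wv h v x * θ x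
            + ∫ ζ in (-h)..(x 2),
                divH v (Function.update x 2 ζ) * θ (Function.update x 2 ζ))) :=
        (MeasureTheory.integral_add hiP1 hiP2).symm
    _ = ∫ x in Box h, (2⁻¹ * (2 * vint h θ x * (v 0 x ^ 2 + v 1 x ^ 2)
            * (advH v (vint h θ) x + wv h v x * θ x)
          + 2 * vint h θ x ^ 2
            * (v 0 x * adv3 v (wv h v) (v 0) x + v 1 x * adv3 v (wv h v) (v 1) x))
        + (v 0 x ^ 2 + v 1 x ^ 2) * vint h θ x
          * ((∫ ζ in (-h)..(x 2), advH v θ (Function.update x 2 ζ)) - advH v (vint h θ) x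
            + ∫ ζ in (-h)..(x 2),
                divH v (Function.update x 2 ζ) * θ (Function.update x 2 ζ))) :=
        MeasureTheory.setIntegral_congr_fun measurableSet_Icc fun x _ => key x
    _ = (∫ x in Box h, 2⁻¹ * (2 * vint h θ x * (v 0 x ^ 2 + v 1 x ^ 2)
            * (advH v (vint h θ) x + wv h v x * θ x)
          + 2 * vint h θ x ^ 2
            * (v 0 x * adv3 v (wv h v) (v 0) x + v 1 x * adv3 v (wv h v) (v 1) x)))
        + ∫ x in Box h, (v 0 x ^ 2 + v 1 x ^ 2) * vint h θ x
          * ((∫ ζ in (-h)..(x 2), advH v θ (Function.update x 2 ζ)) - advH v (vint h θ) x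
            + ∫ ζ in (-h)..(x 2),
                divH v (Function.update x 2 ζ) * θ (Function.update x 2 ζ)) :=
        MeasureTheory.integral_add (hiD.const_mul 2⁻¹) hiP3
    _ = ∫ x in Box h, (v 0 x ^ 2 + v 1 x ^ 2) * vint h θ x
          * ((∫ ζ in (-h)..(x 2), advH v θ (Function.update x 2 ζ)) - advH v (vint h θ) x
            + ∫ ζ in (-h)..(x 2),
                divH v (Function.update x 2 ζ) * θ (Function.update x 2 ζ)) := by
        rw [MeasureTheory.integral_const_mul,
          divergence_zero h hh v hv_smooth hv_per θ hθ_smooth hθ_per hdiv]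
        ring
end
end

section
/- Let v : ℝ³ → ℝ² be smooth and 1-periodic in the horizontal variables, and suppose that ∫_{−h}^0 div_H v(x_H,ζ) dζ = 0 for every x_H. Define the barotropic mode v̄(x_H) = (1/h)∫_{−h}^0 v(x_H,ζ) dζ, the baroclinic mode ṽ = v − v̄, and w(v)(x_H,x₃) = −∫_{−h}^{x₃} div_H v(x_H,ζ) dζ. Then for every x_H, (1/h) ∫_{−h}^0 [ (v·∇_H)v + w(v) ∂₃v ](x_H,ζ) dζ = [(v̄·∇_H)v̄](x_H) + (1/h) ∫_{−h}^0 [ (ṽ·∇_H)ṽ + (div_H ṽ) ṽ ](x_H,ζ) dζ (an identity of ℝ²-valued functions on 𝕋²). -/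
open MeasureTheory Real

noncomputable section

namespace S4

/-- The continuous linear map `y ↦ Function.update y 2 0`. -/
def Lh : (Fin 3 → ℝ) →L[ℝ] (Fin 3 → ℝ) :=
  LinearMap.toContinuousLinearMap
    { toFun := fun y => Function.update y 2 0
      map_add' := by
        intro a b; funext i
        rcases eq_or_ne i 2 with hi | hi <;> simp [Function.update_apply, hi]
      map_smul' := by
        intro c a; funext i
        rcases eq_or_ne i 2 with hi | hi <;> simp [Function.update_apply, hi] }

lemma Lh_apply (y : Fin 3 → ℝ) : Lh y = Function.update y 2 0 := rfl

lemma Lh_single_ne (j : Fin 3) (hj : j ≠ 2) : Lh (Pi.single j 1) = Pi.single j 1 := by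
  funext i
  rcases eq_or_ne i 2 with hi | hi <;>
    simp [Lh_apply, Function.update_apply, hi, Pi.single_apply, hj.symm]

lemma Lh_single_two : Lh (Pi.single (2 : Fin 3) (1:ℝ)) = 0 := by
  funext i
  rcases eq_or_ne i 2 with hi | hi <;>
    simp [Lh_apply, Function.update_apply, hi, Pi.single_apply]

lemma hasFDerivAt_update (ζ : ℝ) (x : Fin 3 → ℝ) :
    HasFDerivAt (fun y : Fin 3 → ℝ => Function.update y 2 ζ) Lh x := by
  have heq : (fun y : Fin 3 → ℝ => Function.update y 2 ζ)
      = fun y => Lh y + Pi.single 2 ζ := by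
    funext y i
    rcases eq_or_ne i 2 with hi | hi <;>
      simp [Lh_apply, Function.update_apply, Pi.single_apply, hi]
  rw [heq]
  exact Lh.hasFDerivAt.add_const _

lemma one_le_top' : ((⊤ : ℕ∞) : WithTop ℕ∞) ≠ 0 := by
  simp

lemma continuous_update (x : Fin 3 → ℝ) :
    Continuous fun ζ : ℝ => Function.update x 2 ζ := by
  apply continuous_pi; intro i
  rcases eq_or_ne i 2 with hi | hi
  · simpa [Function.update_apply, hi] using (continuous_id' : Continuous fun ζ : ℝ => ζ)
  · simpa [Function.update_apply, hi] using (continuous_const : Continuous fun _ : ℝ => x i)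

lemma continuous_update2 :
    Continuous fun p : (Fin 3 → ℝ) × ℝ => Function.update p.1 2 p.2 := by
  apply continuous_pi; intro i
  rcases eq_or_ne i 2 with hi | hi
  · simpa [Function.update_apply, hi] using
      (continuous_snd : Continuous fun p : (Fin 3 → ℝ) × ℝ => p.2)
  · simpa [Function.update_apply, hi] using
      ((continuous_apply i).comp' continuous_fst :
        Continuous fun p : (Fin 3 → ℝ) × ℝ => p.1 i)

lemma continuous_pd (g : (Fin 3 → ℝ) → ℝ) (hg : ContDiff ℝ (⊤ : ℕ∞) g) (j : Fin 3) :
    Continuous (pd j g) :=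
  (hg.continuous_fderiv one_le_top').clm_apply continuous_const

lemma hasFDerivAt_vint (h : ℝ) (g : (Fin 3 → ℝ) → ℝ) (hg : ContDiff ℝ (⊤ : ℕ∞) g)
    (x0 : Fin 3 → ℝ) :
    HasFDerivAt (fun y => ∫ ζ in (-h)..(0:ℝ), g (Function.update y 2 ζ))
      (∫ ζ in (-h)..(0:ℝ), (fderiv ℝ g (Function.update x0 2 ζ)).comp Lh) x0 := by
  obtain ⟨C, hC⟩ : ∃ C, ∀ p ∈ (Metric.closedBall x0 1) ×ˢ (Set.uIcc (-h) (0:ℝ)),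
      ‖fderiv ℝ g (Function.update p.1 2 p.2)‖ ≤ C :=
    ((isCompact_closedBall x0 1).prod isCompact_uIcc).exists_bound_of_continuousOn
      (((hg.continuous_fderiv one_le_top').comp continuous_update2).continuousOn)
  apply intervalIntegral.hasFDerivAt_integral_of_dominated_of_fderiv_le
    (F' := fun y ζ => (fderiv ℝ g (Function.update y 2 ζ)).comp Lh)
    (bound := fun _ => C * ‖Lh‖) (Metric.ball_mem_nhds x0 one_pos)
  · exact Filter.Eventually.of_forall fun y =>
      ((hg.continuous.comp (continuous_update y)).aestronglyMeasurable)
  · exact (hg.continuous.comp (continuous_update x0)).intervalIntegrable _ _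
  · exact ((((ContinuousLinearMap.compL ℝ (Fin 3 → ℝ) (Fin 3 → ℝ) ℝ).flip Lh).continuous.comp
      ((hg.continuous_fderiv one_le_top').comp (continuous_update x0)))).aestronglyMeasurable
  · refine Filter.Eventually.of_forall fun ζ hζ y hy => ?_
    calc ‖(fderiv ℝ g (Function.update y 2 ζ)).comp Lh‖
        ≤ ‖fderiv ℝ g (Function.update y 2 ζ)‖ * ‖Lh‖ := ContinuousLinearMap.opNorm_comp_le _ _
      _ ≤ C * ‖Lh‖ := by
          refine mul_le_mul_of_nonneg_right (hC (y, ζ) ?_) (norm_nonneg _)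
          exact ⟨Metric.ball_subset_closedBall hy, Set.uIoc_subset_uIcc hζ⟩
  · exact intervalIntegrable_const
  · refine Filter.Eventually.of_forall fun ζ hζ y hy => ?_
    exact ((hg.differentiable one_le_top' _).hasFDerivAt).comp y (hasFDerivAt_update ζ y)

lemma intervalIntegrable_CLM (h : ℝ) (g : (Fin 3 → ℝ) → ℝ) (hg : ContDiff ℝ (⊤ : ℕ∞) g)
    (x0 : Fin 3 → ℝ) :
    IntervalIntegrable (fun ζ => (fderiv ℝ g (Function.update x0 2 ζ)).comp Lh)
      volume (-h) 0 :=
  ((((ContinuousLinearMap.compL ℝ (Fin 3 → ℝ) (Fin 3 → ℝ) ℝ).flip Lh).continuous.comp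
      ((hg.continuous_fderiv one_le_top').comp (continuous_update x0)))).intervalIntegrable _ _

lemma pd_bar (h : ℝ) (g : (Fin 3 → ℝ) → ℝ) (hg : ContDiff ℝ (⊤ : ℕ∞) g)
    (x0 : Fin 3 → ℝ) (j : Fin 3) :
    pd j (fun y => (1/h) * ∫ ζ in (-h)..(0:ℝ), g (Function.update y 2 ζ)) x0
      = (1/h) * ∫ ζ in (-h)..(0:ℝ), fderiv ℝ g (Function.update x0 2 ζ) (Lh (Pi.single j 1)) := by
  have hF := (hasFDerivAt_vint h g hg x0).const_mul (1/h)
  rw [pd, hF.fderiv, ContinuousLinearMap.smul_apply,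
    ContinuousLinearMap.intervalIntegral_apply (intervalIntegrable_CLM h g hg x0)]
  simp [ContinuousLinearMap.comp_apply, smul_eq_mul]

lemma differentiableAt_bar (h : ℝ) (g : (Fin 3 → ℝ) → ℝ) (hg : ContDiff ℝ (⊤ : ℕ∞) g)
    (x0 : Fin 3 → ℝ) :
    DifferentiableAt ℝ (fun y => (1/h) * ∫ ζ in (-h)..(0:ℝ), g (Function.update y 2 ζ)) x0 :=
  ((hasFDerivAt_vint h g hg x0).const_mul (1/h)).differentiableAt

end S4

/-- splitting of the averaged convection term into the barotropic and
baroclinic contributions. -/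
theorem statement4
    (h : ℝ) (hh : 0 < h)
    (v : Fin 2 → (Fin 3 → ℝ) → ℝ)
    (hv_smooth : ∀ i, ContDiff ℝ (⊤ : ℕ∞) (v i))
    (hv_per : ∀ i, HorizPeriodic (v i))
    (hdiv : ∀ x : Fin 3 → ℝ, (∫ ζ in (-h)..(0:ℝ), divH v (Function.update x 2 ζ)) = 0)
    (vbar : Fin 2 → (Fin 3 → ℝ) → ℝ)
    (hvbar : ∀ i x, vbar i x = (1 / h) * ∫ ζ in (-h)..(0:ℝ), v i (Function.update x 2 ζ))
    (vtil : Fin 2 → (Fin 3 → ℝ) → ℝ)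
    (hvtil : ∀ i x, vtil i x = v i x - vbar i x)
    (k : Fin 2) (x : Fin 3 → ℝ) :
    (1 / h) * (∫ ζ in (-h)..(0:ℝ),
        (advH v (v k) (Function.update x 2 ζ)
          + wv h v (Function.update x 2 ζ) * pd 2 (v k) (Function.update x 2 ζ)))
      = advH vbar (vbar k) x
        + (1 / h) * (∫ ζ in (-h)..(0:ℝ),
            (advH vtil (vtil k) (Function.update x 2 ζ)
              + divH vtil (Function.update x 2 ζ) * vtil k (Function.update x 2 ζ))) := by
  have hne : h ≠ 0 := ne_of_gt hh
  have hvd : ∀ (i : Fin 2) y, DifferentiableAt ℝ (v i) y := fun i y =>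
    ((hv_smooth i).differentiable S4.one_le_top') y
  have hvbar_eq : ∀ i, vbar i
      = fun y => (1/h) * ∫ ζ in (-h)..(0:ℝ), v i (Function.update y 2 ζ) :=
    fun i => funext fun y => hvbar i y
  have hbard : ∀ (i : Fin 2) y, DifferentiableAt ℝ (vbar i) y := by
    intro i y; rw [hvbar_eq i]; exact S4.differentiableAt_bar h (v i) (hv_smooth i) y
  have hpdbar : ∀ (i : Fin 2) (j : Fin 3) y, pd j (vbar i) y
      = (1/h) * ∫ ζ in (-h)..(0:ℝ),
          fderiv ℝ (v i) (Function.update y 2 ζ) (S4.Lh (Pi.single j 1)) := by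
    intro i j y; rw [hvbar_eq i]; exact S4.pd_bar h (v i) (hv_smooth i) y j
  have hpdbarne : ∀ (i : Fin 2) (j : Fin 3), j ≠ 2 → ∀ y, pd j (vbar i) y
      = (1/h) * ∫ ζ in (-h)..(0:ℝ), pd j (v i) (Function.update y 2 ζ) := by
    intro i j hj y; rw [hpdbar i j y, S4.Lh_single_ne j hj]; rfl
  have hbar_up : ∀ (i : Fin 2) y ζ, vbar i (Function.update y 2 ζ) = vbar i y := by
    intro i y ζ; rw [hvbar i, hvbar i]; simp [Function.update_idem]
  have hpdbar_up : ∀ (i : Fin 2) (j : Fin 3) y ζ,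
      pd j (vbar i) (Function.update y 2 ζ) = pd j (vbar i) y := by
    intro i j y ζ; rw [hpdbar, hpdbar]; simp [Function.update_idem]
  have hvtil_eq : ∀ i, vtil i = fun y => v i y - vbar i y := fun i => funext fun y => hvtil i y
  have hpdtil : ∀ (i : Fin 2) (j : Fin 3) y,
      pd j (vtil i) y = pd j (v i) y - pd j (vbar i) y := by
    intro i j y
    rw [hvtil_eq i, pd, fderiv_fun_sub (hvd i y) (hbard i y)]
    simp [pd]
  -- continuity facts
  have contu := S4.continuous_update x
  have contV : ∀ i : Fin 2, Continuous fun ζ => v i (Function.update x 2 ζ) :=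
    fun i => (hv_smooth i).continuous.comp contu
  have contP : ∀ (i : Fin 2) (j : Fin 3),
      Continuous fun ζ => pd j (v i) (Function.update x 2 ζ) :=
    fun i j => (S4.continuous_pd (v i) (hv_smooth i) j).comp contu
  have contD : Continuous fun ζ => divH v (Function.update x 2 ζ) := by
    simp only [divH]; exact (contP 0 0).add (contP 1 1)
  -- integral identities
  have hIv : ∀ i : Fin 2,
      (∫ ζ in (-h)..(0:ℝ), v i (Function.update x 2 ζ)) = h * vbar i x := by
    intro i; rw [hvbar i x]; field_simp
  have hIpd : ∀ (i : Fin 2) (j : Fin 3), j ≠ 2 →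
      (∫ ζ in (-h)..(0:ℝ), pd j (v i) (Function.update x 2 ζ)) = h * pd j (vbar i) x := by
    intro i j hj; rw [hpdbarne i j hj x]; field_simp
  -- the vertical velocity
  have hW : ∀ ζ : ℝ, wv h v (Function.update x 2 ζ)
      = -(∫ ζ' in (-h)..ζ, divH v (Function.update x 2 ζ')) := by
    intro ζ
    simp only [wv, Function.update_idem, Function.update_self]
  have hWd : ∀ ζ : ℝ, HasDerivAt (fun t => wv h v (Function.update x 2 t))
      (-(divH v (Function.update x 2 ζ))) ζ := by
    intro ζ
    have h1 : HasDerivAt (fun t => ∫ ζ' in (-h)..t, divH v (Function.update x 2 ζ'))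
        (divH v (Function.update x 2 ζ)) ζ :=
      intervalIntegral.integral_hasDerivAt_right (contD.intervalIntegrable _ _)
        (contD.stronglyMeasurableAtFilter _ _) contD.continuousAt
    have heq : (fun t => wv h v (Function.update x 2 t))
        = fun t => -(∫ ζ' in (-h)..t, divH v (Function.update x 2 ζ')) := funext hW
    rw [heq]; exact h1.neg
  have hWcont : Continuous fun t => wv h v (Function.update x 2 t) :=
    continuous_iff_continuousAt.mpr fun t => (hWd t).continuousAt
  have hGd : ∀ ζ : ℝ, HasDerivAt (fun t => v k (Function.update x 2 t))
      (pd 2 (v k) (Function.update x 2 ζ)) ζ := by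
    intro ζ
    have hc : HasDerivAt (fun t : ℝ => Function.update x 2 t) (Pi.single (2:Fin 3) (1:ℝ)) ζ := by
      have heq : (fun t : ℝ => Function.update x 2 t)
          = fun t => t • Pi.single (2:Fin 3) (1:ℝ) + Function.update x 2 0 := by
        funext t i
        rcases eq_or_ne i 2 with hi | hi <;>
          simp [Function.update_apply, Pi.single_apply, hi]
      rw [heq]
      simpa using ((hasDerivAt_id ζ).smul_const ((Pi.single (2:Fin 3) (1:ℝ)) : Fin 3 → ℝ)).add_const (Function.update x 2 0)
    exact ((hvd k _).hasFDerivAt).comp_hasDerivAt ζ hc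
  -- integration by parts
  have hIBP : (∫ ζ in (-h)..(0:ℝ),
        wv h v (Function.update x 2 ζ) * pd 2 (v k) (Function.update x 2 ζ))
      = ∫ ζ in (-h)..(0:ℝ), divH v (Function.update x 2 ζ) * v k (Function.update x 2 ζ) := by
    have hPd : ∀ t ∈ Set.uIcc (-h) (0:ℝ),
        HasDerivAt (fun s => wv h v (Function.update x 2 s) * v k (Function.update x 2 s))
          (-(divH v (Function.update x 2 t)) * v k (Function.update x 2 t)
            + wv h v (Function.update x 2 t) * pd 2 (v k) (Function.update x 2 t)) t :=
      fun t _ => (hWd t).mul (hGd t)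
    have hint1 : IntervalIntegrable
        (fun t => -(divH v (Function.update x 2 t)) * v k (Function.update x 2 t))
        volume (-h) 0 := ((contD.neg).mul (contV k)).intervalIntegrable _ _
    have hint2 : IntervalIntegrable
        (fun t => wv h v (Function.update x 2 t) * pd 2 (v k) (Function.update x 2 t))
        volume (-h) 0 := (hWcont.mul (contP k 2)).intervalIntegrable _ _
    have h0 := intervalIntegral.integral_eq_sub_of_hasDerivAt hPd (hint1.add hint2)
    rw [intervalIntegral.integral_add hint1 hint2] at h0
    have hW0 : wv h v (Function.update x 2 (0:ℝ)) = 0 := by rw [hW 0, hdiv x, neg_zero]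
    have hWh : wv h v (Function.update x 2 (-h)) = 0 := by
      rw [hW (-h), intervalIntegral.integral_same, neg_zero]
    rw [hW0, hWh, zero_mul, zero_mul, sub_zero] at h0
    have hneg : (∫ t in (-h)..(0:ℝ),
          -(divH v (Function.update x 2 t)) * v k (Function.update x 2 t))
        = -∫ t in (-h)..(0:ℝ), divH v (Function.update x 2 t) * v k (Function.update x 2 t) := by
      rw [← intervalIntegral.integral_neg]
      exact intervalIntegral.integral_congr fun t _ => neg_mul _ _
    rw [hneg] at h0
    linarith
  -- pointwise identity for the baroclinic integrand
  have hRint : ∀ ζ : ℝ,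
      vtil 0 (Function.update x 2 ζ) * pd 0 (vtil k) (Function.update x 2 ζ)
        + vtil 1 (Function.update x 2 ζ) * pd 1 (vtil k) (Function.update x 2 ζ)
        + divH vtil (Function.update x 2 ζ) * vtil k (Function.update x 2 ζ)
      = (v 0 (Function.update x 2 ζ) * pd 0 (v k) (Function.update x 2 ζ)
          + v 1 (Function.update x 2 ζ) * pd 1 (v k) (Function.update x 2 ζ)
          + divH v (Function.update x 2 ζ) * v k (Function.update x 2 ζ))
        - (vbar 0 x * pd 0 (v k) (Function.update x 2 ζ)
            + pd 0 (vbar k) x * v 0 (Function.update x 2 ζ)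
            + vbar 1 x * pd 1 (v k) (Function.update x 2 ζ)
            + pd 1 (vbar k) x * v 1 (Function.update x 2 ζ)
            + (pd 0 (vbar 0) x + pd 1 (vbar 1) x) * v k (Function.update x 2 ζ)
            + vbar k x * divH v (Function.update x 2 ζ))
        + (vbar 0 x * pd 0 (vbar k) x + vbar 1 x * pd 1 (vbar k) x
            + (pd 0 (vbar 0) x + pd 1 (vbar 1) x) * vbar k x) := by
    intro ζ
    simp only [divH, hvtil, hpdtil, hpdbar_up, hbar_up]
    ring
  -- integrability of the pieces
  have hS : IntervalIntegrable (fun ζ =>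
      v 0 (Function.update x 2 ζ) * pd 0 (v k) (Function.update x 2 ζ)
        + v 1 (Function.update x 2 ζ) * pd 1 (v k) (Function.update x 2 ζ)) volume (-h) 0 :=
    (((contV 0).mul (contP k 0)).add ((contV 1).mul (contP k 1))).intervalIntegrable _ _
  have hDV : IntervalIntegrable (fun ζ =>
      divH v (Function.update x 2 ζ) * v k (Function.update x 2 ζ)) volume (-h) 0 :=
    (contD.mul (contV k)).intervalIntegrable _ _
  have hWP2 : IntervalIntegrable (fun ζ =>
      wv h v (Function.update x 2 ζ) * pd 2 (v k) (Function.update x 2 ζ)) volume (-h) 0 :=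
    (hWcont.mul (contP k 2)).intervalIntegrable _ _
  have iY1 : IntervalIntegrable (fun ζ =>
      vbar 0 x * pd 0 (v k) (Function.update x 2 ζ)) volume (-h) 0 :=
    (continuous_const.mul (contP k 0)).intervalIntegrable _ _
  have iY2 : IntervalIntegrable (fun ζ =>
      pd 0 (vbar k) x * v 0 (Function.update x 2 ζ)) volume (-h) 0 :=
    (continuous_const.mul (contV 0)).intervalIntegrable _ _
  have iY3 : IntervalIntegrable (fun ζ =>
      vbar 1 x * pd 1 (v k) (Function.update x 2 ζ)) volume (-h) 0 :=
    (continuous_const.mul (contP k 1)).intervalIntegrable _ _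
  have iY4 : IntervalIntegrable (fun ζ =>
      pd 1 (vbar k) x * v 1 (Function.update x 2 ζ)) volume (-h) 0 :=
    (continuous_const.mul (contV 1)).intervalIntegrable _ _
  have iY5 : IntervalIntegrable (fun ζ =>
      (pd 0 (vbar 0) x + pd 1 (vbar 1) x) * v k (Function.update x 2 ζ)) volume (-h) 0 :=
    (continuous_const.mul (contV k)).intervalIntegrable _ _
  have iY6 : IntervalIntegrable (fun ζ =>
      vbar k x * divH v (Function.update x 2 ζ)) volume (-h) 0 :=
    (continuous_const.mul contD).intervalIntegrable _ _
  have hmain : (∫ ζ in (-h)..(0:ℝ),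
        (advH v (v k) (Function.update x 2 ζ)
          + wv h v (Function.update x 2 ζ) * pd 2 (v k) (Function.update x 2 ζ)))
      = h * advH vbar (vbar k) x
        + ∫ ζ in (-h)..(0:ℝ),
            (advH vtil (vtil k) (Function.update x 2 ζ)
              + divH vtil (Function.update x 2 ζ) * vtil k (Function.update x 2 ζ)) := by
    simp only [advH]
    rw [intervalIntegral.integral_add hS hWP2, hIBP]
    rw [intervalIntegral.integral_congr (fun ζ _ => hRint ζ)]
    have yall := ((((iY1.add iY2).add iY3).add iY4).add iY5).add iY6
    rw [intervalIntegral.integral_add ((hS.add hDV).sub yall) intervalIntegrable_const,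
      intervalIntegral.integral_sub (hS.add hDV) yall,
      intervalIntegral.integral_add hS hDV,
      intervalIntegral.integral_add (((((iY1.add iY2).add iY3).add iY4)).add iY5) iY6,
      intervalIntegral.integral_add ((((iY1.add iY2).add iY3)).add iY4) iY5,
      intervalIntegral.integral_add (((iY1.add iY2)).add iY3) iY4,
      intervalIntegral.integral_add ((iY1.add iY2)) iY3,
      intervalIntegral.integral_add iY1 iY2]
    simp only [intervalIntegral.integral_const_mul]
    rw [hIv 0, hIv 1, hIv k, hIpd k 0 (by decide), hIpd k 1 (by decide), hdiv x,
      intervalIntegral.integral_const]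
    simp only [smul_eq_mul, sub_neg_eq_add, zero_add, mul_zero]
    ring
  rw [hmain]
  field_simp
end
end
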